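/- For a full-rank lattice ℒ ⊂ ℤ^n and σ > 0, if v is sampled from the discrete Gaussian distribution D_{ℒ,σ}, then Pr[‖v‖₂ > σ·√n] ≤ 2^{-2n}. -/

import Mathlib

open scoped BigOperators

open ENNReal NNReal

noncomputable section

namespace BanaszczykAux

lemma summable_int_exp {t : ℝ} (ht : 0 < t) :
    Summable (fun k : ℤ => Real.exp (-(t * (k : ℝ) ^ 2))) := by
  have key : Summable (fun n : ℕ => Real.exp (-(t * (n : ℝ) ^ 2))) := by
    refine Summable.of_nonneg_of_le (fun n => (Real.exp_pos _).le) ?_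
      (summable_geometric_of_lt_one (Real.exp_pos (-t)).le
        (Real.exp_lt_one_iff.mpr (by linarith)))
    intro n
    rw [← Real.exp_nat_mul]
    apply Real.exp_le_exp.mpr
    have : (n : ℝ) ≤ (n : ℝ) ^ 2 := by
      rcases Nat.eq_zero_or_pos n with h | h
      · simp [h]
      · nlinarith [(Nat.one_le_cast (α := ℝ)).mpr h]
    nlinarith
  apply Summable.of_nat_of_neg
  · exact key
  · simpa using key

lemma tsum_pi_enn : ∀ (n : ℕ) (h : ℤ → ℝ≥0∞),
    ∑' x : Fin n → ℤ, ∏ i, h (x i) = ∏ _i : Fin n, ∑' k : ℤ, h k := by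
  intro n
  induction n with
  | zero => intro h; rw [tsum_fintype]; simp
  | succ n ih =>
    intro h
    rw [← (Fin.consEquiv (fun _ : Fin (n+1) => ℤ)).tsum_eq]
    rw [Fin.prod_univ_succ]
    rw [ENNReal.tsum_prod']
    calc ∑' (a : ℤ) (b : Fin n → ℤ), ∏ i : Fin (n+1), h ((Fin.consEquiv (fun _ => ℤ)) (a, b) i)
        = ∑' (a : ℤ) (b : Fin n → ℤ), h a * ∏ i : Fin n, h (b i) := by
          congr 1; ext a; congr 1; ext b
          rw [Fin.prod_univ_succ]
          simp [Fin.consEquiv]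
      _ = ∑' (a : ℤ), h a * ∑' (b : Fin n → ℤ), ∏ i : Fin n, h (b i) := by
          congr 1; ext a; exact ENNReal.tsum_mul_left
      _ = (∑' a : ℤ, h a) * ∑' (b : Fin n → ℤ), ∏ i : Fin n, h (b i) := ENNReal.tsum_mul_right
      _ = _ := by rw [ih h]

lemma enn_two_mul_le (a b : ℝ≥0∞) : 2 * (a * b) ≤ a ^ 2 + b ^ 2 := by
  rcases eq_or_ne a ⊤ with ha | ha
  · have : a ^ 2 + b ^ 2 = ⊤ := by rw [ha]; simp
    exact this ▸ le_top
  rcases eq_or_ne b ⊤ with hb | hb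
  · have : a ^ 2 + b ^ 2 = ⊤ := by rw [hb]; simp
    exact this ▸ le_top
  lift a to ℝ≥0 using ha
  lift b to ℝ≥0 using hb
  rw [← ENNReal.coe_mul, ← ENNReal.coe_pow, ← ENNReal.coe_pow]
  have h2 : (2 : ℝ≥0∞) = ((2 : ℝ≥0) : ℝ≥0∞) := by norm_num
  rw [h2, ← ENNReal.coe_mul, ← ENNReal.coe_add, ENNReal.coe_le_coe, ← NNReal.coe_le_coe]
  push_cast
  nlinarith [sq_nonneg ((a : ℝ) - (b : ℝ))]

lemma enn_le_of_sq_le_sq {a b : ℝ≥0∞} (h : a ^ 2 ≤ b ^ 2) : a ≤ b := by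
  by_contra hab
  push_neg at hab
  exact absurd h (not_le.mpr (ENNReal.pow_lt_pow_left two_ne_zero hab))

lemma ambient_ne_top {n : ℕ} {t : ℝ} (ht : 0 < t) :
    (∑' v : Fin n → ℤ, ENNReal.ofReal (Real.exp (-(t * ∑ i, ((v i : ℤ) : ℝ) ^ 2)))) ≠ ⊤ := by
  have hrw : ∀ v : Fin n → ℤ,
      ENNReal.ofReal (Real.exp (-(t * ∑ i, ((v i : ℤ) : ℝ) ^ 2)))
        = ∏ i, ENNReal.ofReal (Real.exp (-(t * ((v i : ℤ) : ℝ) ^ 2))) := by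
    intro v
    rw [← ENNReal.ofReal_prod_of_nonneg (fun i _ => (Real.exp_pos _).le), ← Real.exp_sum]
    congr 1
    rw [Finset.mul_sum, ← Finset.sum_neg_distrib]
  simp only [hrw]
  refine Eq.trans_ne (tsum_pi_enn n fun k : ℤ => ENNReal.ofReal (Real.exp (-(t * (k:ℝ)^2)))) ?_
  refine (ENNReal.prod_lt_top ?_).ne
  intro i _
  rw [← ENNReal.ofReal_tsum_of_nonneg (fun k => (Real.exp_pos _).le) (summable_int_exp ht)]
  exact ENNReal.ofReal_lt_top

def par {m : ℕ} (c : Fin m → ℤ) : Fin m → ZMod 2 := fun i => (c i : ZMod 2)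

def parityEquiv (m : ℕ) : ((Fin m → ℤ) × (Fin m → ℤ)) ≃
    {q : (Fin m → ℤ) × (Fin m → ℤ) // par q.1 = par q.2} where
  toFun ab := ⟨(ab.1 + ab.2, ab.1 - ab.2), by
    funext i
    show ((ab.1 i + ab.2 i : ℤ) : ZMod 2) = ((ab.1 i - ab.2 i : ℤ) : ZMod 2)
    rw [ZMod.intCast_eq_intCast_iff, Int.modEq_iff_dvd]
    exact ⟨-(ab.2 i), by push_cast; ring⟩⟩
  invFun q := (fun i => (q.1.1 i + q.1.2 i) / 2, fun i => (q.1.1 i - q.1.2 i) / 2)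
  left_inv ab := by
    ext i <;> simp only [Pi.add_apply, Pi.sub_apply] <;> omega
  right_inv q := by
    obtain ⟨⟨c, d⟩, h⟩ := q
    have hdvd : ∀ i, (2 : ℤ) ∣ (d i - c i) := by
      intro i
      have h2 := congrFun h i
      rw [show par c i = ((c i : ℤ) : ZMod 2) from rfl,
        show par d i = ((d i : ℤ) : ZMod 2) from rfl, ZMod.intCast_eq_intCast_iff,
        Int.modEq_iff_dvd] at h2
      exact_mod_cast h2
    apply Subtype.ext
    apply Prod.ext <;> funext i <;> have h3 := hdvd i <;>
      simp only [Pi.add_apply, Pi.sub_apply] <;> omega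

lemma cs_key {m : ℕ} (f g : (Fin m → ℤ) → ℝ≥0∞)
    (hfg : ∀ a b, f (a + b) * f (a - b) = g a * g b) :
    (∑' c, f c) ^ 2 ≤ 2 ^ m * (∑' c, g c) ^ 2 := by
  classical
  set A : (Fin m → ZMod 2) → ℝ≥0∞ := fun p => ∑' c, if par c = p then f c else 0 with hA
  have h1 : ∑' c, f c = ∑ p : Fin m → ZMod 2, A p := by
    rw [← Summable.tsum_finsetSum (fun p _ => ENNReal.summable)]
    congr 1; funext c
    rw [Finset.sum_ite_eq]
    simp
  have h2 : (∑ p : Fin m → ZMod 2, A p) ^ 2 ≤ 2 ^ m * ∑ p : Fin m → ZMod 2, A p ^ 2 := by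
    have hcard : (Fintype.card (Fin m → ZMod 2) : ℝ≥0∞) = 2 ^ m := by
      simp [Fintype.card_fun]
    have key : 2 * (∑ p : Fin m → ZMod 2, A p) ^ 2
        ≤ 2 * (2 ^ m * ∑ p : Fin m → ZMod 2, A p ^ 2) := by
      calc 2 * (∑ p : Fin m → ZMod 2, A p) ^ 2
          = ∑ p : Fin m → ZMod 2, ∑ q : Fin m → ZMod 2, 2 * (A p * A q) := by
            rw [sq, Finset.sum_mul_sum, Finset.mul_sum]
            congr 1; funext p
            rw [Finset.mul_sum]
        _ ≤ ∑ p : Fin m → ZMod 2, ∑ q : Fin m → ZMod 2, (A p ^ 2 + A q ^ 2) := by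
            refine Finset.sum_le_sum fun p _ => Finset.sum_le_sum fun q _ => ?_
            exact enn_two_mul_le (A p) (A q)
        _ = 2 * (2 ^ m * ∑ p : Fin m → ZMod 2, A p ^ 2) := by
            simp only [Finset.sum_add_distrib, Finset.sum_const, Finset.card_univ, nsmul_eq_mul]
            rw [← Finset.mul_sum, hcard]
            ring
    exact (ENNReal.mul_le_mul_iff_right two_ne_zero ENNReal.ofNat_ne_top).mp key
  have h3 : ∑ p : Fin m → ZMod 2, A p ^ 2
      = ∑' c : Fin m → ℤ, ∑' d : Fin m → ℤ, (if par c = par d then f c * f d else 0) := by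
    have hsq : ∀ p : Fin m → ZMod 2, A p ^ 2
        = ∑' c : Fin m → ℤ, ∑' d : Fin m → ℤ,
            ((if par c = p then f c else 0) * (if par d = p then f d else 0)) := by
      intro p
      rw [sq, hA]
      rw [← ENNReal.tsum_mul_right]
      congr 1; funext c
      rw [← ENNReal.tsum_mul_left]
    simp only [hsq]
    rw [← Summable.tsum_finsetSum (fun p _ => ENNReal.summable)]
    congr 1; funext c
    rw [← Summable.tsum_finsetSum (fun p _ => ENNReal.summable)]
    congr 1; funext d
    by_cases hcd : par c = par d
    · rw [if_pos hcd, hcd]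
      have : ∀ p : Fin m → ZMod 2,
          (if par d = p then f c else 0) * (if par d = p then f d else 0)
            = if par d = p then f c * f d else 0 := by
        intro p; by_cases h : par d = p <;> simp [h]
      simp only [this]
      rw [Finset.sum_ite_eq]
      simp
    · rw [if_neg hcd]
      apply Finset.sum_eq_zero
      intro p _
      by_cases h : par c = p
      · rw [if_pos h, if_neg (fun h' => hcd (h.trans h'.symm)), mul_zero]
      · rw [if_neg h, zero_mul]
  have h4 : (∑' c : Fin m → ℤ, ∑' d : Fin m → ℤ, (if par c = par d then f c * f d else 0))
      = ∑' ab : (Fin m → ℤ) × (Fin m → ℤ), g ab.1 * g ab.2 := by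
    have e1 : (∑' ab : (Fin m → ℤ) × (Fin m → ℤ),
        (if par ab.1 = par ab.2 then f ab.1 * f ab.2 else 0))
        = ∑' c : Fin m → ℤ, ∑' d : Fin m → ℤ, (if par c = par d then f c * f d else 0) :=
      ENNReal.tsum_prod'
    rw [← e1]
    have hind : ∀ x : (Fin m → ℤ) × (Fin m → ℤ),
        (if par x.1 = par x.2 then f x.1 * f x.2 else 0)
          = Set.indicator {q : (Fin m → ℤ) × (Fin m → ℤ) | par q.1 = par q.2}
              (fun q => f q.1 * f q.2) x := by
      intro x
      rw [Set.indicator_apply]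
      congr 1
    simp only [hind]
    rw [← tsum_subtype]
    calc (∑' x : ↑{q : (Fin m → ℤ) × (Fin m → ℤ) | par q.1 = par q.2},
            f (↑x : (Fin m → ℤ) × (Fin m → ℤ)).1 * f (↑x : (Fin m → ℤ) × (Fin m → ℤ)).2)
        = ∑' ab : (Fin m → ℤ) × (Fin m → ℤ), f (ab.1 + ab.2) * f (ab.1 - ab.2) :=
          ((parityEquiv m).tsum_eq
            (fun q : {q : (Fin m → ℤ) × (Fin m → ℤ) // par q.1 = par q.2} =>
              f q.1.1 * f q.1.2)).symm
      _ = ∑' ab : (Fin m → ℤ) × (Fin m → ℤ), g ab.1 * g ab.2 :=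
          tsum_congr fun ab => hfg ab.1 ab.2
  have h5 : (∑' ab : (Fin m → ℤ) × (Fin m → ℤ), g ab.1 * g ab.2) = (∑' c, g c) ^ 2 := by
    rw [ENNReal.tsum_prod', sq]
    calc ∑' (a : Fin m → ℤ) (b : Fin m → ℤ), g a * g b
        = ∑' a : Fin m → ℤ, g a * ∑' b : Fin m → ℤ, g b := by
          congr 1; funext a; exact ENNReal.tsum_mul_left
      _ = (∑' c, g c) * (∑' c, g c) := ENNReal.tsum_mul_right
  rw [h1]
  calc (∑ p : Fin m → ZMod 2, A p) ^ 2 ≤ 2 ^ m * ∑ p : Fin m → ZMod 2, A p ^ 2 := h2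
    _ = 2 ^ m * (∑' c, g c) ^ 2 := by rw [h3, h4, h5]

lemma key_half {m : ℕ} (Q : (Fin m → ℤ) → ℝ)
    (hpar : ∀ a b, Q (a + b) + Q (a - b) = 2 * Q a + 2 * Q b) (t : ℝ) :
    (∑' c : Fin m → ℤ, ENNReal.ofReal (Real.exp (-(t / 2 * Q c)))) ^ 2
      ≤ 2 ^ m * (∑' c : Fin m → ℤ, ENNReal.ofReal (Real.exp (-(t * Q c)))) ^ 2 := by
  refine cs_key _ _ fun a b => ?_
  rw [← ENNReal.ofReal_mul (Real.exp_pos _).le, ← ENNReal.ofReal_mul (Real.exp_pos _).le,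
    ← Real.exp_add, ← Real.exp_add]
  congr 1
  congr 1
  linear_combination (-(t / 2)) * hpar a b

lemma key_quarter {m : ℕ} (Q : (Fin m → ℤ) → ℝ)
    (hpar : ∀ a b, Q (a + b) + Q (a - b) = 2 * Q a + 2 * Q b) (t : ℝ) :
    (∑' c : Fin m → ℤ, ENNReal.ofReal (Real.exp (-(t / 4 * Q c))))
      ≤ 2 ^ m * ∑' c : Fin m → ℤ, ENNReal.ofReal (Real.exp (-(t * Q c))) := by
  apply enn_le_of_sq_le_sq
  have e : (∑' c : Fin m → ℤ, ENNReal.ofReal (Real.exp (-(t / 4 * Q c))))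
      = ∑' c : Fin m → ℤ, ENNReal.ofReal (Real.exp (-(t / 2 / 2 * Q c))) := by
    apply tsum_congr
    intro c
    rw [show t / 2 / 2 = t / 4 by ring]
  calc (∑' c : Fin m → ℤ, ENNReal.ofReal (Real.exp (-(t / 4 * Q c)))) ^ 2
      = (∑' c : Fin m → ℤ, ENNReal.ofReal (Real.exp (-(t / 2 / 2 * Q c)))) ^ 2 := by rw [e]
    _ ≤ 2 ^ m * (∑' c : Fin m → ℤ, ENNReal.ofReal (Real.exp (-(t / 2 * Q c)))) ^ 2 :=
        key_half Q hpar (t / 2)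
    _ ≤ 2 ^ m * (2 ^ m * (∑' c : Fin m → ℤ, ENNReal.ofReal (Real.exp (-(t * Q c)))) ^ 2) :=
        mul_le_mul_right (key_half Q hpar t) _
    _ = (2 ^ m * ∑' c : Fin m → ℤ, ENNReal.ofReal (Real.exp (-(t * Q c)))) ^ 2 := by ring

lemma const_bound {n m : ℕ} (hmn : m ≤ n) :
    Real.exp (-(3 * Real.pi * (n : ℝ) / 4)) * 2 ^ m ≤ (2 : ℝ) ^ (-(2 * (n : ℤ))) := by
  have h8 : (8 : ℝ) ≤ Real.exp (3 * Real.pi / 4) := by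
    have h2 : (2.35 : ℝ) ≤ 3 * Real.pi / 4 := by nlinarith [Real.pi_gt_d6]
    have hE := Real.exp_one_gt_d9
    have h035 := Real.add_one_le_exp (0.35 : ℝ)
    have hexp2 : Real.exp 2 = Real.exp 1 * Real.exp 1 := by rw [← Real.exp_add]; norm_num
    have hE2 : (7.38 : ℝ) ≤ Real.exp 2 := by nlinarith
    calc (8 : ℝ) ≤ Real.exp 2 * Real.exp 0.35 := by nlinarith [Real.exp_pos (2:ℝ)]
      _ = Real.exp 2.35 := by rw [← Real.exp_add]; norm_num
      _ ≤ Real.exp (3 * Real.pi / 4) := Real.exp_le_exp.mpr h2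
  have e1 : Real.exp (-(3 * Real.pi * (n : ℝ) / 4)) = Real.exp (-(3 * Real.pi / 4)) ^ n := by
    rw [← Real.exp_nat_mul]
    congr 1
    ring
  have e2 : Real.exp (-(3 * Real.pi / 4)) ≤ 1 / 8 := by
    rw [Real.exp_neg]
    rw [one_div]
    exact inv_anti₀ (by norm_num) h8
  have e3 : (2 : ℝ) ^ (-(2 * (n : ℤ))) = (1 / 4 : ℝ) ^ n := by
    rw [zpow_neg]
    rw [show (2 * (n : ℤ)) = ((2 * n : ℕ) : ℤ) by push_cast; ring, zpow_natCast]
    rw [pow_mul]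
    rw [one_div, inv_pow]
    norm_num
  rw [e1, e3]
  calc Real.exp (-(3 * Real.pi / 4)) ^ n * 2 ^ m
      ≤ (1 / 8 : ℝ) ^ n * 2 ^ n := by
        apply mul_le_mul
        · exact pow_le_pow_left₀ (Real.exp_pos _).le e2 n
        · exact pow_le_pow_right₀ one_le_two hmn
        · positivity
        · positivity
    _ = (1 / 4 : ℝ) ^ n := by
        rw [← mul_pow]
        norm_num
end BanaszczykAux


/-- Banaszczyk's tail bound: for a full-rank lattice `L ⊆ ℤ^n` and the discrete
    Gaussian `D_{L,σ}` (probability of `x` proportional to `exp(-π‖x‖²/σ²)`),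
    the probability that `‖v‖₂ > σ√n` is at most `2^{-2n}`. -/
theorem discrete_gaussian_tail_bound (n : ℕ) (L : Submodule ℤ (Fin n → ℤ)) (σ : ℝ)
    (hσ : 0 < σ)
    (hfull : Submodule.span ℝ
        ((fun (x : Fin n → ℤ) (i : Fin n) => ((x i : ℤ) : ℝ)) ''
          (L : Set (Fin n → ℤ))) = ⊤) :
    (∑' x : {v : Fin n → ℤ //
        v ∈ L ∧ σ * Real.sqrt n < Real.sqrt (∑ i, ((v i : ℤ) : ℝ) ^ 2)},
      Real.exp (-(Real.pi * (∑ i, (((x : Fin n → ℤ) i : ℤ) : ℝ) ^ 2) / σ ^ 2))) ≤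
    (2 : ℝ) ^ (-(2 * (n : ℤ))) *
      ∑' x : L,
        Real.exp (-(Real.pi * (∑ i, (((x : Fin n → ℤ) i : ℤ) : ℝ) ^ 2) / σ ^ 2)) := by
  classical
  open BanaszczykAux in
  obtain ⟨m, b⟩ := Submodule.basisOfPid (Pi.basisFun ℤ (Fin n)) L
  -- rank bound
  have hmn : m ≤ n := by
    have hli : LinearIndependent ℤ (fun i => ((b i : L) : Fin n → ℤ)) :=
      b.linearIndependent.map' L.subtype L.ker_subtype
    have hcard := hli.fintype_card_le_finrank
    simpa [Module.finrank_pi] using hcard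
  set t : ℝ := Real.pi / σ ^ 2 with htdef
  have ht : 0 < t := div_pos Real.pi_pos (by positivity)
  -- the ambient energy function
  set F : ℝ → (Fin n → ℤ) → ℝ≥0∞ :=
    fun s v => ENNReal.ofReal (Real.exp (-(s * ∑ i, ((v i : ℤ) : ℝ) ^ 2))) with hF
  -- transport to coordinates
  set ψ : (Fin m → ℤ) →ₗ[ℤ] (Fin n → ℤ) := L.subtype ∘ₗ b.equivFun.symm.toLinearMap
    with hψ
  set Qm : (Fin m → ℤ) → ℝ := fun c => ∑ j, ((ψ c j : ℤ) : ℝ) ^ 2 with hQm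
  have hpar : ∀ a c, Qm (a + c) + Qm (a - c) = 2 * Qm a + 2 * Qm c := by
    intro a c
    simp only [hQm, map_add, map_sub, Pi.add_apply, Pi.sub_apply, Int.cast_add, Int.cast_sub]
    rw [← Finset.sum_add_distrib, Finset.mul_sum, Finset.mul_sum, ← Finset.sum_add_distrib]
    exact Finset.sum_congr rfl fun j _ => by ring
  set eL : (Fin m → ℤ) ≃ L := b.equivFun.symm.toEquiv with heL
  have hSLm : ∀ s : ℝ, (∑' x : L, F s (x : Fin n → ℤ))
      = ∑' c : Fin m → ℤ, ENNReal.ofReal (Real.exp (-(s * Qm c))) := by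
    intro s
    exact (eL.tsum_eq (fun x : L => F s (x : Fin n → ℤ))).symm
  -- finiteness of the full sum
  have hfin : (∑' x : L, F t (x : Fin n → ℤ)) ≠ ⊤ := by
    refine ne_top_of_le_ne_top (ambient_ne_top (n := n) ht) ?_
    exact ENNReal.tsum_comp_le_tsum_of_injective Subtype.val_injective _
  -- main ENNReal chain on the tail
  set Tail := {v : Fin n → ℤ //
      v ∈ L ∧ σ * Real.sqrt n < Real.sqrt (∑ i, ((v i : ℤ) : ℝ) ^ 2)} with hTail
  have step3 : (∑' x : L, F (t / 4) (x : Fin n → ℤ)) ≤ 2 ^ m * ∑' x : L, F t (x : Fin n → ℤ) := by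
    rw [hSLm, hSLm]
    exact key_quarter Qm hpar t
  have chain : (∑' x : Tail, F t (x : Fin n → ℤ))
      ≤ ENNReal.ofReal (Real.exp (-(3 * Real.pi * (n : ℝ) / 4)))
          * (2 ^ m * ∑' x : L, F t (x : Fin n → ℤ)) := by
    calc (∑' x : Tail, F t (x : Fin n → ℤ))
        ≤ ∑' x : Tail, ENNReal.ofReal (Real.exp (-(3 * Real.pi * (n : ℝ) / 4)))
            * F (t / 4) (x : Fin n → ℤ) := by
          refine ENNReal.tsum_le_tsum fun x => ?_
          obtain ⟨v, hvL, hvtail⟩ := x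
          simp only [hF]
          rw [← ENNReal.ofReal_mul (Real.exp_pos _).le, ← Real.exp_add]
          apply ENNReal.ofReal_le_ofReal
          apply Real.exp_le_exp.mpr
          set S : ℝ := ∑ i, ((v i : ℤ) : ℝ) ^ 2
          have hS0 : (0 : ℝ) ≤ S := Finset.sum_nonneg fun _ _ => sq_nonneg _
          have hlt : σ ^ 2 * n < S := by
            have h1 : (σ * Real.sqrt n) ^ 2 < Real.sqrt S ^ 2 := by
              apply pow_lt_pow_left₀ hvtail (by positivity) two_ne_zero
            rw [Real.sq_sqrt hS0, mul_pow, Real.sq_sqrt (Nat.cast_nonneg n)] at h1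
            exact h1
          have hts : Real.pi * n ≤ t * S := by
            rw [htdef, div_mul_eq_mul_div, le_div_iff₀ (by positivity)]
            nlinarith [Real.pi_pos]
          linarith
      _ = ENNReal.ofReal (Real.exp (-(3 * Real.pi * (n : ℝ) / 4)))
            * ∑' x : Tail, F (t / 4) (x : Fin n → ℤ) := ENNReal.tsum_mul_left
      _ ≤ ENNReal.ofReal (Real.exp (-(3 * Real.pi * (n : ℝ) / 4)))
            * ∑' x : L, F (t / 4) (x : Fin n → ℤ) := by
          apply mul_le_mul_right
          have hinj : Function.Injective (fun x : Tail => (⟨(x : Fin n → ℤ), x.2.1⟩ : L)) := by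
            intro x y hxy
            apply Subtype.ext
            simpa using congrArg Subtype.val hxy
          exact ENNReal.tsum_comp_le_tsum_of_injective hinj (fun y : L => F (t / 4) y)
      _ ≤ ENNReal.ofReal (Real.exp (-(3 * Real.pi * (n : ℝ) / 4)))
            * (2 ^ m * ∑' x : L, F t (x : Fin n → ℤ)) := mul_le_mul_right step3 _
  -- tail sum is finite
  have hTfin : (∑' x : Tail, F t (x : Fin n → ℤ)) ≠ ⊤ := by
    refine ne_top_of_le_ne_top ?_ chain
    exact ENNReal.mul_ne_top ENNReal.ofReal_ne_top
      (ENNReal.mul_ne_top (by simp [ENNReal.pow_ne_top]) hfin)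
  -- summability of the real series
  have hsummL : Summable (fun x : L =>
      Real.exp (-(t * ∑ i, (((x : Fin n → ℤ) i : ℤ) : ℝ) ^ 2))) := by
    have := ENNReal.summable_toReal hfin
    simpa only [hF, ENNReal.toReal_ofReal (Real.exp_pos _).le] using this
  have hsummT : Summable (fun x : Tail =>
      Real.exp (-(t * ∑ i, (((x : Fin n → ℤ) i : ℤ) : ℝ) ^ 2))) := by
    have := ENNReal.summable_toReal hTfin
    simpa only [hF, ENNReal.toReal_ofReal (Real.exp_pos _).le] using this
  -- rewrite the statement's exponents
  have hexparg : ∀ v : Fin n → ℤ,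
      Real.exp (-(Real.pi * (∑ i, ((v i : ℤ) : ℝ) ^ 2) / σ ^ 2))
        = Real.exp (-(t * ∑ i, ((v i : ℤ) : ℝ) ^ 2)) := by
    intro v
    congr 1
    rw [htdef]
    ring
  rw [tsum_congr (fun x : Tail => hexparg (x : Fin n → ℤ)),
    tsum_congr (fun x : L => hexparg (x : Fin n → ℤ))]
  -- final descent from ENNReal
  have hRHSnn : (0 : ℝ) ≤ (2 : ℝ) ^ (-(2 * (n : ℤ)))
      * ∑' x : L, Real.exp (-(t * ∑ i, (((x : Fin n → ℤ) i : ℤ) : ℝ) ^ 2)) := by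
    apply mul_nonneg (by positivity)
    exact tsum_nonneg fun _ => (Real.exp_pos _).le
  rw [← ENNReal.ofReal_le_ofReal_iff hRHSnn]
  have hofT : ENNReal.ofReal
      (∑' x : Tail, Real.exp (-(t * ∑ i, (((x : Fin n → ℤ) i : ℤ) : ℝ) ^ 2)))
        = ∑' x : Tail, F t (x : Fin n → ℤ) :=
    ENNReal.ofReal_tsum_of_nonneg (fun _ => (Real.exp_pos _).le) hsummT
  have hofL : ENNReal.ofReal
      (∑' x : L, Real.exp (-(t * ∑ i, (((x : Fin n → ℤ) i : ℤ) : ℝ) ^ 2)))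
        = ∑' x : L, F t (x : Fin n → ℤ) :=
    ENNReal.ofReal_tsum_of_nonneg (fun _ => (Real.exp_pos _).le) hsummL
  rw [ENNReal.ofReal_mul (by positivity), hofT, hofL]
  refine le_trans chain ?_
  rw [← mul_assoc]
  apply mul_le_mul_left
  calc ENNReal.ofReal (Real.exp (-(3 * Real.pi * (n : ℝ) / 4))) * 2 ^ m
      = ENNReal.ofReal (Real.exp (-(3 * Real.pi * (n : ℝ) / 4)) * 2 ^ m) := by
        rw [ENNReal.ofReal_mul (Real.exp_pos _).le]
        congr 1
        rw [ENNReal.ofReal_pow (by norm_num)]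
        norm_num
    _ ≤ ENNReal.ofReal ((2 : ℝ) ^ (-(2 * (n : ℤ)))) :=
        ENNReal.ofReal_le_ofReal (const_bound hmn)
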